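/- Under no-anticipation, conditional parallel trends, and overlap, for any periods t' < s ≤ t < s', the cohort-s ATT at time t satisfies E[τ_{it} | t* = s] = E[Y_{it} − Y_{it'} | t* = s] − E[ E[Y_{it} − Y_{it'} | t* = s', X] | t* = s ], where τ_{it} = Y_{it}(s) − Y_{it}(0). -/

import Mathlib

open Finset
open scoped Classical

/-- Conditional expectation `E[Z ∣ A]` on a finite probability space with mass
function `P`. -/
noncomputable def cexp {Ω : Type*} [Fintype Ω] (P : Ω → ℝ) (A : Ω → Prop) (Z : Ω → ℝ) : ℝ :=
  (∑ ω, if A ω then P ω * Z ω else 0) / (∑ ω, if A ω then P ω else 0)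

lemma cexp_def {Ω : Type*} [Fintype Ω] (P : Ω → ℝ) (A : Ω → Prop) [∀ ω, Decidable (A ω)]
    (Z : Ω → ℝ) :
    cexp P A Z = (∑ ω, if A ω then P ω * Z ω else 0) / (∑ ω, if A ω then P ω else 0) := by
  unfold cexp
  congr 1 <;> exact Finset.sum_congr rfl fun ω _ => by by_cases h : A ω <;> simp [h]

lemma cexp_congr' {Ω : Type*} [Fintype Ω] (P : Ω → ℝ) (A : Ω → Prop) (Z1 Z2 : Ω → ℝ)
    (h : ∀ ω, A ω → P ω ≠ 0 → Z1 ω = Z2 ω) : cexp P A Z1 = cexp P A Z2 := by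
  unfold cexp
  congr 1
  refine Finset.sum_congr rfl fun ω _ => ?_
  by_cases hA : A ω
  · by_cases hp : P ω = 0
    · simp [hA, hp]
    · simp [hA, h ω hA hp]
  · simp [hA]

lemma cexp_congr {Ω : Type*} [Fintype Ω] (P : Ω → ℝ) (A : Ω → Prop) (Z1 Z2 : Ω → ℝ)
    (h : ∀ ω, A ω → Z1 ω = Z2 ω) : cexp P A Z1 = cexp P A Z2 :=
  cexp_congr' P A Z1 Z2 fun ω hA _ => h ω hA

lemma cexp_add {Ω : Type*} [Fintype Ω] (P : Ω → ℝ) (A : Ω → Prop) (Z1 Z2 : Ω → ℝ) :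
    cexp P A (fun ω => Z1 ω + Z2 ω) = cexp P A Z1 + cexp P A Z2 := by
  unfold cexp
  rw [← add_div]
  congr 1
  rw [← Finset.sum_add_distrib]
  refine Finset.sum_congr rfl fun ω _ => ?_
  by_cases hA : A ω <;> simp [hA, mul_add]

lemma cexp_sub {Ω : Type*} [Fintype Ω] (P : Ω → ℝ) (A : Ω → Prop) (Z1 Z2 : Ω → ℝ) :
    cexp P A (fun ω => Z1 ω - Z2 ω) = cexp P A Z1 - cexp P A Z2 := by
  unfold cexp
  rw [div_sub_div_same]
  congr 1
  rw [← Finset.sum_sub_distrib]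
  refine Finset.sum_congr rfl fun ω _ => ?_
  by_cases hA : A ω <;> simp [hA, mul_sub]

lemma cexp_tower {Ω 𝓧 : Type*} [Fintype Ω] (P : Ω → ℝ) (hP : ∀ ω, 0 ≤ P ω)
    (A : Ω → Prop) (X : Ω → 𝓧) (G : Ω → ℝ) :
    cexp P A (fun ω => cexp P (fun ω' => A ω' ∧ X ω' = X ω) G) = cexp P A G := by
  classical
  rw [cexp_def, cexp_def]
  congr 1
  rw [← Finset.sum_fiberwise_of_maps_to (g := X) (t := Finset.univ.image X)
      (fun ω _ => Finset.mem_image_of_mem X (Finset.mem_univ ω)),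
    ← Finset.sum_fiberwise_of_maps_to (g := X) (t := Finset.univ.image X)
      (fun ω _ => Finset.mem_image_of_mem X (Finset.mem_univ ω))
      (fun ω => if A ω then P ω * G ω else 0)]
  refine Finset.sum_congr rfl fun x hx => ?_
  set m : ℝ := ∑ ω, if A ω ∧ X ω = x then P ω else 0 with hm_def
  set N : ℝ := ∑ ω, if A ω ∧ X ω = x then P ω * G ω else 0 with hN_def
  have hc : ∀ ω : Ω, X ω = x → cexp P (fun ω' => A ω' ∧ X ω' = X ω) G = N / m := by
    intro ω hω
    rw [cexp_def]
    congr 1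
    · rw [hN_def]
      exact Finset.sum_congr rfl fun ω' _ => by
        by_cases h : A ω' ∧ X ω' = x <;> simp [hω, h]
    · rw [hm_def]
      exact Finset.sum_congr rfl fun ω' _ => by
        by_cases h : A ω' ∧ X ω' = x <;> simp [hω, h]
  have hL : (∑ ω ∈ Finset.univ.filter (fun ω => X ω = x),
      if A ω then P ω * cexp P (fun ω' => A ω' ∧ X ω' = X ω) G else 0) = m * (N / m) := by
    rw [Finset.sum_filter]
    have hpt : ∀ ω : Ω,
        (if X ω = x then (if A ω then P ω * cexp P (fun ω' => A ω' ∧ X ω' = X ω) G else 0) else 0)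
        = (if A ω ∧ X ω = x then P ω else 0) * (N / m) := by
      intro ω
      by_cases h2 : X ω = x
      · by_cases h1 : A ω
        · rw [if_pos h2, if_pos h1, if_pos ⟨h1, h2⟩, hc ω h2]
        · have : ¬ (A ω ∧ X ω = x) := fun h => h1 h.1
          simp [h1, h2, this]
      · have : ¬ (A ω ∧ X ω = x) := fun h => h2 h.2
        simp [h2, this]
    rw [Finset.sum_congr rfl fun ω _ => hpt ω, ← Finset.sum_mul, ← hm_def]
  have hR : (∑ ω ∈ Finset.univ.filter (fun ω => X ω = x),
      if A ω then P ω * G ω else 0) = N := by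
    rw [Finset.sum_filter, hN_def]
    refine Finset.sum_congr rfl fun ω _ => ?_
    by_cases h1 : A ω <;> by_cases h2 : X ω = x <;> simp [h1, h2]
  beta_reduce
  rw [hL, hR]
  by_cases hm0 : m = 0
  · have hnn : ∀ ω ∈ Finset.univ, (0:ℝ) ≤ if A ω ∧ X ω = x then P ω else 0 := by
      intro ω _
      by_cases h : A ω ∧ X ω = x <;> simp [h, hP ω]
    have hz : ∀ ω, (A ω ∧ X ω = x) → P ω = 0 := by
      intro ω hω
      have h0 := (Finset.sum_eq_zero_iff_of_nonneg hnn).mp hm0 ω (Finset.mem_univ ω)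
      simpa [hω] using h0
    have hN0 : N = 0 := by
      rw [hN_def]
      refine Finset.sum_eq_zero fun ω _ => ?_
      by_cases h : A ω ∧ X ω = x
      · simp [h, hz ω h]
      · simp [h]
    simp [hm0, hN0]
  · rw [mul_comm, div_mul_cancel₀ _ hm0]

/-- identification lemma. On a finite probability space, with
potential outcomes `Ypot t a` (outcome at time `t` under adoption time `a`),
no anticipation, conditional parallel trends, overlap, and periods
`t' < s ≤ t < s'`, the cohort-`s` ATT at time `t` equals the DiD contrast
`E[Y_t − Y_{t'} ∣ t* = s] − E[ E[Y_t − Y_{t'} ∣ t* = s', X] ∣ t* = s ]`. -/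
theorem statement0
    {Ω 𝓧 : Type*} [Fintype Ω]
    (P : Ω → ℝ) (hP : ∀ ω, 0 ≤ P ω) (hP1 : ∑ ω, P ω = 1)
    (tstar : Ω → ℕ∞) (X : Ω → 𝓧)
    (Ypot : ℕ → ℕ∞ → Ω → ℝ) (Y : ℕ → Ω → ℝ)
    (hY : ∀ t ω, Y t ω = Ypot t (tstar ω) ω)
    -- no treatment anticipation: before adoption, outcomes follow the untreated path
    (hNA : ∀ (t : ℕ) (a : ℕ∞) (ω : Ω), (t : ℕ∞) < a → Ypot t a ω = Ypot t ⊤ ω)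
    -- conditional parallel trends
    (hCPT : ∀ (t : ℕ) (u : ℕ∞) (x : 𝓧),
      0 < (∑ ω, if tstar ω = u ∧ X ω = x then P ω else 0) →
      cexp P (fun ω => tstar ω = u ∧ X ω = x) (fun ω => Ypot (t + 1) ⊤ ω - Ypot t ⊤ ω)
        = cexp P (fun ω => X ω = x) (fun ω => Ypot (t + 1) ⊤ ω - Ypot t ⊤ ω))
    (s : ℕ) (s' : ℕ∞) (t t' : ℕ)
    (ht's : t' < s) (hst : s ≤ t) (hts' : (t : ℕ∞) < s')
    -- overlap / positivity
    (hps : 0 < (∑ ω, if tstar ω = (s : ℕ∞) then P ω else 0))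
    (hov : ∀ x : 𝓧, 0 < (∑ ω, if tstar ω = (s : ℕ∞) ∧ X ω = x then P ω else 0) →
      0 < (∑ ω, if tstar ω = s' ∧ X ω = x then P ω else 0)) :
    cexp P (fun ω => tstar ω = (s : ℕ∞)) (fun ω => Ypot t (s : ℕ∞) ω - Ypot t ⊤ ω)
      = cexp P (fun ω => tstar ω = (s : ℕ∞)) (fun ω => Y t ω - Y t' ω)
        - cexp P (fun ω => tstar ω = (s : ℕ∞))
            (fun ω => cexp P (fun ω' => tstar ω' = s' ∧ X ω' = X ω)
              (fun ω' => Y t ω' - Y t' ω')) := by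
  have ht't : t' < t := lt_of_lt_of_le ht's hst
  have hcast1 : (t' : ℕ∞) < (s : ℕ∞) := by exact_mod_cast ht's
  have hcast2 : (t' : ℕ∞) < s' := lt_trans (by exact_mod_cast ht't) hts'
  have tele : ∀ (u : ℕ∞) (x : 𝓧),
      0 < (∑ ω, if tstar ω = u ∧ X ω = x then P ω else 0) →
      ∀ b : ℕ, t' ≤ b →
      cexp P (fun ω => tstar ω = u ∧ X ω = x) (fun ω => Ypot b ⊤ ω - Ypot t' ⊤ ω)
        = cexp P (fun ω => X ω = x) (fun ω => Ypot b ⊤ ω - Ypot t' ⊤ ω) := by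
    intro u x hpos b hb
    induction b, hb using Nat.le_induction with
    | base =>
        rw [cexp_congr P (fun ω => tstar ω = u ∧ X ω = x) _ (fun _ => (0:ℝ))
            (fun ω _ => sub_self _),
          cexp_congr P (fun ω => X ω = x) _ (fun _ => (0:ℝ)) (fun ω _ => sub_self _)]
        simp [cexp]
    | succ b hb ih =>
        have split : ∀ (A : Ω → Prop),
            cexp P A (fun ω => Ypot (b + 1) ⊤ ω - Ypot t' ⊤ ω)
              = cexp P A (fun ω => Ypot (b + 1) ⊤ ω - Ypot b ⊤ ω)
                + cexp P A (fun ω => Ypot b ⊤ ω - Ypot t' ⊤ ω) := by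
          intro A
          rw [← cexp_add]
          exact cexp_congr P A _ _ (fun ω _ => by ring)
        rw [split, split, ih, hCPT b u x hpos]
  have hterm1 : cexp P (fun ω => tstar ω = (s : ℕ∞)) (fun ω => Y t ω - Y t' ω)
      = cexp P (fun ω => tstar ω = (s : ℕ∞)) (fun ω => Ypot t (s : ℕ∞) ω - Ypot t' ⊤ ω) := by
    refine cexp_congr P _ _ _ fun ω hω => ?_
    rw [hY t ω, hY t' ω, hω, hNA t' (s : ℕ∞) ω hcast1]
  have hterm2 : cexp P (fun ω => tstar ω = (s : ℕ∞))
        (fun ω => cexp P (fun ω' => tstar ω' = s' ∧ X ω' = X ω)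
          (fun ω' => Y t ω' - Y t' ω'))
      = cexp P (fun ω => tstar ω = (s : ℕ∞)) (fun ω => Ypot t ⊤ ω - Ypot t' ⊤ ω) := by
    have step1 : ∀ x : 𝓧,
        cexp P (fun ω' => tstar ω' = s' ∧ X ω' = x) (fun ω' => Y t ω' - Y t' ω')
          = cexp P (fun ω' => tstar ω' = s' ∧ X ω' = x)
              (fun ω' => Ypot t ⊤ ω' - Ypot t' ⊤ ω') := by
      intro x
      refine cexp_congr P _ _ _ fun ω' hω' => ?_
      rw [hY t ω', hY t' ω', hω'.1, hNA t s' ω' hts', hNA t' s' ω' hcast2]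
    have step2 : cexp P (fun ω => tstar ω = (s : ℕ∞))
          (fun ω => cexp P (fun ω' => tstar ω' = s' ∧ X ω' = X ω)
            (fun ω' => Y t ω' - Y t' ω'))
        = cexp P (fun ω => tstar ω = (s : ℕ∞))
            (fun ω => cexp P (fun ω' => tstar ω' = (s : ℕ∞) ∧ X ω' = X ω)
              (fun ω' => Ypot t ⊤ ω' - Ypot t' ⊤ ω')) := by
      refine cexp_congr' P _ _ _ fun ω hω hp => ?_
      have hpos_s : 0 < (∑ ω', if tstar ω' = (s : ℕ∞) ∧ X ω' = X ω then P ω' else 0) := by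
        refine Finset.sum_pos' (fun ω' _ => ?_) ⟨ω, Finset.mem_univ ω, ?_⟩
        · by_cases h : tstar ω' = (s : ℕ∞) ∧ X ω' = X ω <;> simp [h, hP ω']
        · rw [if_pos ⟨hω, rfl⟩]
          exact lt_of_le_of_ne (hP ω) (Ne.symm hp)
      have hpos_s' := hov (X ω) hpos_s
      rw [step1 (X ω), tele s' (X ω) hpos_s' t (le_of_lt ht't),
        ← tele (s : ℕ∞) (X ω) hpos_s t (le_of_lt ht't)]
    rw [step2]
    exact cexp_tower P hP (fun ω => tstar ω = (s : ℕ∞)) X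
      (fun ω => Ypot t ⊤ ω - Ypot t' ⊤ ω)
  rw [hterm1, hterm2, ← cexp_sub]
  exact cexp_congr P _ _ _ fun ω _ => by ring
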